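/- Closed walks factor through excursions: Let V be a type, σ ∈ V, and w : V → V → [0,∞] (extended nonnegative reals). For a finite sequence γ = (σ₁, …, σ_ℓ) define its weight as ∏_{i=1}^{ℓ−1} w(σ_i, σ_{i+1}) (the empty product being 1). Let W ∈ [0,∞] be the tsum of the weights of all walks σ = σ₁, …, σ_ℓ = σ with ℓ ≥ 1 (including the trivial walk of length ℓ = 1, which has weight 1), and let F ∈ [0,∞] be the tsum of the weights of all excursions from σ to σ, i.e. walks σ = σ₁, …, σ_ℓ = σ with ℓ ≥ 2 and σ_i ≠ σ for 1 < i < ℓ. Then W = ∑'_{p∈ℕ} F^p. -/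

import Mathlib

open scoped ENNReal

/-- The weight of a finite walk: the product (in `[0,∞]`) of the edge weights
along its consecutive pairs; the empty product is `1`. -/
noncomputable def walkWeight {V : Type*} (w : V → V → ℝ≥0∞) : List V → ℝ≥0∞
  | [] => 1
  | [_] => 1
  | a :: b :: l => w a b * walkWeight w (b :: l)

/-- `l` is a closed walk at `σ`: a sequence of length `≥ 1` starting and ending
at `σ` (the trivial walk `[σ]` is allowed and has weight `1`). -/
def IsClosedWalk {V : Type*} (σ : V) (l : List V) : Prop :=
  l ≠ [] ∧ l.head? = some σ ∧ l.getLast? = some σ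

/-- `l` is an excursion from `σ` to `σ`: a walk of length `≥ 2` starting and
ending at `σ` whose intermediate vertices are all different from `σ`. -/
def IsExcursion {V : Type*} (σ : V) (l : List V) : Prop :=
  2 ≤ l.length ∧ l.head? = some σ ∧ l.getLast? = some σ ∧ ∀ x ∈ l.tail.dropLast, x ≠ σ

namespace ClosedExcAux

variable {V : Type*}

/-- concatenate the tails of a list of walks -/
def glueT : List (List V) → List V
  | [] => []
  | e :: L => e.tail ++ glueT L

/-- glue a list of excursions into a closed walk -/
def glue (σ : V) (L : List (List V)) : List V := σ :: glueT L

theorem walkWeight_append (w : V → V → ℝ≥0∞) (l : List V) (a : V) (m : List V) :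
    walkWeight w (l ++ a :: m) = walkWeight w (l ++ [a]) * walkWeight w (a :: m) := by
  induction l with
  | nil => simp [walkWeight]
  | cons b l ih =>
    cases l with
    | nil => simp [walkWeight, mul_assoc]
    | cons c l =>
      show w b c * walkWeight w (c :: l ++ a :: m) =
        w b c * walkWeight w (c :: l ++ [a]) * walkWeight w (a :: m)
      rw [ih, mul_assoc]

theorem exc_decomp {σ : V} {e : List V} (he : IsExcursion σ e) :
    ∃ t : List V, e = σ :: (t ++ [σ]) ∧ σ ∉ t := by
  obtain ⟨hlen, hhead, hlast, hmid⟩ := he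
  cases e with
  | nil => simp at hlen
  | cons a rest =>
    have ha : σ = a := by have h := hhead; simp at h; exact h.symm
    subst ha
    cases rest with
    | nil => simp at hlen
    | cons b r =>
      have hne : (b :: r : List V) ≠ [] := by simp
      have hlast' : (b :: r).getLast? = some σ := by
        rwa [List.getLast?_cons_cons] at hlast
      have h1 : (b :: r).getLast hne = σ := by
        rw [List.getLast?_eq_getLast hne] at hlast'
        exact Option.some.inj hlast'
      refine ⟨(b :: r).dropLast, ?_, ?_⟩
      · rw [← h1, List.dropLast_append_getLast hne]
      · intro hmem
        exact hmid σ (by simpa using hmem) rfl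

theorem exc_of {σ : V} (t : List V) (ht : σ ∉ t) : IsExcursion σ (σ :: (t ++ [σ])) := by
  refine ⟨?_, rfl, ?_, ?_⟩
  · simp only [List.length_cons, List.length_append, List.length_singleton]
    omega
  · rw [show σ :: (t ++ [σ]) = (σ :: t) ++ [σ] from rfl,
      List.getLast?_append_of_ne_nil _ (by simp)]
    rfl
  · intro x hx
    simp only [List.tail_cons, List.dropLast_concat] at hx
    exact fun h => ht (h ▸ hx)

theorem glue_getLast {σ : V} (L : List (List V)) (hL : ∀ e ∈ L, IsExcursion σ e) :
    (glue σ L).getLast? = some σ := by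
  induction L with
  | nil => rfl
  | cons e L ih =>
    obtain ⟨t, rfl, -⟩ := exc_decomp (hL e (by simp))
    have ih' := ih (fun e he => hL e (by simp [he]))
    have hrw : glue σ ((σ :: (t ++ [σ])) :: L) = (σ :: (t ++ [σ])) ++ glueT L := by
      simp [glue, glueT]
    rw [hrw]
    rcases hg : glueT L with _ | ⟨b, m⟩
    · rw [List.append_nil, ← List.cons_append]
      exact List.getLast?_concat
    · rw [List.getLast?_append_of_ne_nil _ (by simp)]
      rw [glue, show (σ :: glueT L : List V) = [σ] ++ glueT L from rfl,
        List.getLast?_append_of_ne_nil _ (by rw [hg]; simp), hg] at ih'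
      exact ih'

theorem glue_isClosedWalk {σ : V} (L : List (List V)) (hL : ∀ e ∈ L, IsExcursion σ e) :
    IsClosedWalk σ (glue σ L) :=
  ⟨by simp [glue], rfl, glue_getLast L hL⟩

theorem glue_weight (σ : V) (w : V → V → ℝ≥0∞) (L : List (List V))
    (hL : ∀ e ∈ L, IsExcursion σ e) :
    walkWeight w (glue σ L) = (L.map (walkWeight w)).prod := by
  induction L with
  | nil => simp [glue, glueT, walkWeight]
  | cons e L ih =>
    obtain ⟨t, he, -⟩ := exc_decomp (hL e (by simp))
    have ih' := ih (fun e he => hL e (by simp [he]))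
    have hrw : glue σ (e :: L) = (σ :: t) ++ σ :: glueT L := by
      simp [glue, glueT, he]
    rw [hrw, walkWeight_append, List.map_cons, List.prod_cons,
      show (σ :: glueT L : List V) = glue σ L from rfl, ih', he, List.cons_append]

theorem first_occ {σ : V} : ∀ {t t' r r' : List V}, σ ∉ t → σ ∉ t' →
    t ++ σ :: r = t' ++ σ :: r' → t = t' ∧ r = r' := by
  intro t
  induction t with
  | nil =>
    intro t' r r' _ ht' h
    cases t' with
    | nil => simpa using h
    | cons b t'' =>
      simp only [List.nil_append, List.cons_append, List.cons.injEq] at h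
      obtain ⟨h1, -⟩ := h
      subst h1
      exact absurd (List.mem_cons_self) ht'
  | cons a t ih =>
    intro t' r r' ht ht' h
    cases t' with
    | nil =>
      simp only [List.cons_append, List.nil_append, List.cons.injEq] at h
      obtain ⟨h1, -⟩ := h
      subst h1
      exact absurd (List.mem_cons_self) ht
    | cons b t'' =>
      simp only [List.cons_append, List.cons.injEq] at h
      obtain ⟨rfl, h2⟩ := h
      obtain ⟨h3, h4⟩ := ih (fun hx => ht (List.mem_cons_of_mem _ hx))
        (fun hx => ht' (List.mem_cons_of_mem _ hx)) h2
      exact ⟨by rw [h3], h4⟩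

theorem glue_inj {σ : V} : ∀ (L L' : List (List V)), (∀ e ∈ L, IsExcursion σ e) →
    (∀ e ∈ L', IsExcursion σ e) → glue σ L = glue σ L' → L = L' := by
  intro L
  induction L with
  | nil =>
    intro L' _ hL' h
    cases L' with
    | nil => rfl
    | cons e' M' =>
      obtain ⟨t', he', -⟩ := exc_decomp (hL' e' (by simp))
      exfalso
      apply_fun List.length at h
      simp only [glue, glueT, he', List.tail_cons, List.length_cons, List.length_nil,
        List.length_append, List.length_singleton] at h
      omega
  | cons e M ih =>
    intro L' hL hL' h
    cases L' with
    | nil =>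
      obtain ⟨t, he, -⟩ := exc_decomp (hL e (by simp))
      exfalso
      apply_fun List.length at h
      simp only [glue, glueT, he, List.tail_cons, List.length_cons, List.length_nil,
        List.length_append, List.length_singleton] at h
      omega
    | cons e' M' =>
      obtain ⟨t, he, ht⟩ := exc_decomp (hL e (by simp))
      obtain ⟨t', he', ht'⟩ := exc_decomp (hL' e' (by simp))
      have h2 : t ++ σ :: glueT M = t' ++ σ :: glueT M' := by
        have h' := h
        simp only [glue, glueT, he, he', List.tail_cons, List.cons.injEq, true_and] at h'
        simpa [List.append_assoc] using h'
      obtain ⟨h3, h4⟩ := first_occ ht ht' h2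
      have hM : M = M' := ih M' (fun x hx => hL x (by simp [hx]))
        (fun x hx => hL' x (by simp [hx])) (by rw [glue, glue, h4])
      rw [he, he', h3, hM]

theorem split_first {σ : V} : ∀ {m : List V}, σ ∈ m → ∃ t r, m = t ++ σ :: r ∧ σ ∉ t := by
  intro m
  induction m with
  | nil => intro h; simp at h
  | cons a m ih =>
    intro h
    by_cases ha : a = σ
    · exact ⟨[], m, by rw [ha]; rfl, by simp⟩
    · have hm : σ ∈ m := by
        rcases List.mem_cons.mp h with h | h
        · exact absurd h.symm ha
        · exact h
      obtain ⟨t, r, rfl, ht⟩ := ih hm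
      refine ⟨a :: t, r, rfl, ?_⟩
      simp only [List.mem_cons, not_or]
      exact ⟨fun hh => ha hh.symm, ht⟩

theorem glue_surj {σ : V} : ∀ (n : ℕ) (l : List V), l.length ≤ n → IsClosedWalk σ l →
    ∃ L, (∀ e ∈ L, IsExcursion σ e) ∧ glue σ L = l := by
  intro n
  induction n with
  | zero =>
    intro l hl hcl
    exact absurd (List.length_eq_zero_iff.mp (Nat.le_zero.mp hl)) hcl.1
  | succ n ih =>
    intro l hl hcl
    obtain ⟨hne, hhead, hlast⟩ := hcl
    obtain ⟨a, rest, rfl⟩ := List.exists_cons_of_ne_nil hne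
    have ha : σ = a := by have h := hhead; simp at h; exact h.symm
    subst ha
    cases rest with
    | nil => exact ⟨[], by simp, rfl⟩
    | cons b r0 =>
      have hrne : (b :: r0 : List V) ≠ [] := by simp
      have hlast' : (b :: r0).getLast? = some σ := by
        rwa [List.getLast?_cons_cons] at hlast
      have hmem : σ ∈ (b :: r0 : List V) := by
        rw [List.getLast?_eq_getLast hrne] at hlast'
        rw [← Option.some.inj hlast']
        exact List.getLast_mem hrne
      obtain ⟨t, r, hsplit, ht⟩ := split_first hmem
      have hrlast : (σ :: r : List V).getLast? = some σ := by
        cases r with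
        | nil => rfl
        | cons c r' =>
          rw [List.getLast?_cons_cons]
          rw [hsplit, show t ++ σ :: c :: r' = (t ++ [σ]) ++ c :: r' by simp,
            List.getLast?_append_of_ne_nil _ (by simp)] at hlast'
          exact hlast'
      have hlen : (σ :: r : List V).length ≤ n := by
        have h1 := congrArg List.length hsplit
        simp only [List.length_cons, List.length_append] at h1 ⊢
        simp only [List.length_cons] at hl
        omega
      obtain ⟨L, hLexc, hglue⟩ := ih (σ :: r) hlen ⟨by simp, rfl, hrlast⟩
      refine ⟨(σ :: (t ++ [σ])) :: L, ?_, ?_⟩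
      · intro e he
        rcases List.mem_cons.mp he with rfl | he
        · exact exc_of t ht
        · exact hLexc e he
      · have hgT : glueT L = r := by
          have h2 : σ :: glueT L = σ :: r := hglue
          exact (List.cons.injEq _ _ _ _ ▸ h2).2
        show σ :: ((t ++ [σ]) ++ glueT L) = σ :: b :: r0
        rw [hgT, hsplit]
        simp

theorem tsum_pow_aux {α : Type*} (f : α → ℝ≥0∞) : ∀ n : ℕ,
    (∑' v : Fin n → α, ∏ i, f (v i)) = (∑' a, f a) ^ n := by
  intro n
  induction n with
  | zero =>
    rw [pow_zero]
    have h1 : ∀ v : Fin 0 → α, (∏ i, f (v i)) = 1 := fun v => by simp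
    simp only [h1]
    exact (tsum_eq_single (fun i => i.elim0)
      (fun b' hb' => (hb' (funext fun i => i.elim0)).elim)).trans rfl
  | succ n ih =>
    rw [pow_succ, ← ih, mul_comm]
    calc (∑' v : Fin (n + 1) → α, ∏ i, f (v i))
        = ∑' p : α × (Fin n → α), f p.1 * ∏ i, f (p.2 i) := by
          rw [← Equiv.tsum_eq (Fin.consEquiv (fun _ : Fin (n+1) => α))
            (fun v => ∏ i, f (v i))]
          refine tsum_congr fun p => ?_
          rw [Fin.prod_univ_succ]
          simp [Fin.consEquiv]
      _ = ∑' a : α, ∑' v : Fin n → α, f a * ∏ i, f (v i) := ENNReal.tsum_prod'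
      _ = (∑' a, f a) * ∑' v : Fin n → α, ∏ i, f (v i) := by
          simp_rw [ENNReal.tsum_mul_left]
          rw [ENNReal.tsum_mul_right]

end ClosedExcAux

open ClosedExcAux in
/-- **Closed walks factor through excursions.** The total weight of all closed
walks at `σ` equals `∑_{p ∈ ℕ} F^p` where `F` is the total weight of all
excursions from `σ` to `σ`. -/
theorem closed_walks_factor_through_excursions {V : Type*} (σ : V) (w : V → V → ℝ≥0∞) :
    (∑' l : {l : List V // IsClosedWalk σ l}, walkWeight w l.1) =
      ∑' p : ℕ, (∑' l : {l : List V // IsExcursion σ l}, walkWeight w l.1) ^ p := by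
  classical
  set Exc := {l : List V // IsExcursion σ l} with hExc
  set CW := {l : List V // IsClosedWalk σ l} with hCW
  have hmap : ∀ L : List Exc, ∀ e ∈ L.map Subtype.val, IsExcursion σ e := by
    intro L e he
    obtain ⟨⟨e', he'⟩, -, rfl⟩ := List.mem_map.mp he
    exact he'
  let G : List Exc → CW := fun L =>
    ⟨glue σ (L.map Subtype.val), glue_isClosedWalk _ (hmap L)⟩
  have hGbij : Function.Bijective G := by
    constructor
    · intro L L' h
      have h2 : glue σ (L.map Subtype.val) = glue σ (L'.map Subtype.val) :=
        congrArg Subtype.val h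
      have h3 := glue_inj _ _ (hmap L) (hmap L') h2
      exact List.map_injective_iff.mpr Subtype.val_injective h3
    · rintro ⟨l, hl⟩
      obtain ⟨L, hLexc, hglue⟩ := glue_surj l.length l le_rfl hl
      refine ⟨L.attach.map (fun e => (⟨e.1, hLexc e.1 e.2⟩ : Exc)), ?_⟩
      apply Subtype.ext
      show glue σ _ = l
      rw [List.map_map]
      simpa [Function.comp] using hglue
  let E : List Exc ≃ CW := Equiv.ofBijective G hGbij
  have hweight : ∀ L : List Exc,
      walkWeight w ((E L).1) = (L.map (fun e : Exc => walkWeight w e.1)).prod := by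
    intro L
    show walkWeight w (glue σ (L.map Subtype.val)) = _
    rw [glue_weight σ w _ (hmap L), List.map_map]
    rfl
  have hofFn : ∀ (x : Σ n, Fin n → Exc),
      (((List.equivSigmaTuple (α := Exc)).symm x).map
        (fun e : Exc => walkWeight w e.1)).prod = ∏ i, walkWeight w ((x.2 i)).1 := by
    rintro ⟨n, v⟩
    show ((List.ofFn v).map _).prod = _
    rw [List.map_ofFn, List.prod_ofFn]
    rfl
  calc (∑' l : CW, walkWeight w l.1)
      = ∑' L : List Exc, walkWeight w ((E L).1) := (E.tsum_eq _).symm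
    _ = ∑' L : List Exc, (L.map (fun e : Exc => walkWeight w e.1)).prod :=
        tsum_congr hweight
    _ = ∑' x : Σ n, Fin n → Exc, ∏ i, walkWeight w ((x.2 i)).1 := by
        rw [← Equiv.tsum_eq (List.equivSigmaTuple (α := Exc)).symm]
        exact tsum_congr hofFn
    _ = ∑' n : ℕ, ∑' v : Fin n → Exc, ∏ i, walkWeight w ((v i)).1 :=
        ENNReal.tsum_sigma' _
    _ = ∑' p : ℕ, (∑' e : Exc, walkWeight w e.1) ^ p :=
        tsum_congr fun n => tsum_pow_aux (fun e : Exc => walkWeight w e.1) n
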